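/- Let A ⊆ B(H) be an operator algebra with contractive approximate identity, M ⊆ B(H,K) a σ-TRO with M* M A ⊆ A, and Y = closed span of M A. Fix (m_i) in M with ∑_i m_i m_i* m = m for all m ∈ M and ‖∑_{i≤n} m_i m_i*‖ ≤ 1 for all n. Then the map f : Y → ℓ²-column space over A given by f(y) = (m_i* y)_{i∈ℕ} is a well-defined linear isometry, i.e., ‖(m_i* y)_i‖² = ‖∑_i y* m_i m_i* y‖ = ‖y‖² for all y ∈ Y. -/
import Mathlib


open Filter Topology ContinuousLinearMap

/-- The norm-closed linear span of a set of operators. -/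
noncomputable def clspan {H K : Type*} [NormedAddCommGroup H] [InnerProductSpace ℂ H]
    [NormedAddCommGroup K] [InnerProductSpace ℂ K] (S : Set (H →L[ℂ] K)) : Set (H →L[ℂ] K) :=
  closure ((Submodule.span ℂ S : Submodule ℂ (H →L[ℂ] K)) : Set (H →L[ℂ] K))

/-- With `A` an operator algebra with cai, `M` a σ-TRO with `M* M A ⊆ A`,
`Y = clspan (M A)` and `(m i)` a σ-TRO sequence for `M`, the map `f(y) = (mᵢ* y)ᵢ` is a
well-defined isometry into the column space over `A`: each column entry `mᵢ* y` lies in `A`,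
the series `∑ᵢ (mᵢ* y)* (mᵢ* y) = ∑ᵢ y* mᵢ mᵢ* y` converges in norm, and the norm of its sum
equals `‖y‖²`. -/
theorem stmt_6 {H K : Type*} [NormedAddCommGroup H] [InnerProductSpace ℂ H] [CompleteSpace H]
    [NormedAddCommGroup K] [InnerProductSpace ℂ K] [CompleteSpace K]
    (A : Submodule ℂ (H →L[ℂ] H)) (M : Submodule ℂ (H →L[ℂ] K))
    (hAc : IsClosed (A : Set (H →L[ℂ] H))) (hAm : ∀ x ∈ A, ∀ y ∈ A, x ∘L y ∈ A)
    {ι : Type*} [Preorder ι] [IsDirected ι (· ≤ ·)] [Nonempty ι]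
    (e : ι → (H →L[ℂ] H)) (he : ∀ i, e i ∈ A) (hen : ∀ i, ‖e i‖ ≤ 1)
    (heL : ∀ x ∈ A, Tendsto (fun i => e i ∘L x) atTop (𝓝 x))
    (heR : ∀ x ∈ A, Tendsto (fun i => x ∘L e i) atTop (𝓝 x))
    (hMc : IsClosed (M : Set (H →L[ℂ] K)))
    (hMtro : ∀ x ∈ M, ∀ y ∈ M, ∀ z ∈ M, x ∘L (adjoint y ∘L z) ∈ M)
    (hMMA : ∀ x ∈ M, ∀ y ∈ M, ∀ a ∈ A, adjoint x ∘L (y ∘L a) ∈ A)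
    (m : ℕ → (H →L[ℂ] K)) (hm : ∀ i, m i ∈ M)
    (hmn : ∀ n, ‖∑ i ∈ Finset.range n, m i ∘L adjoint (m i)‖ ≤ 1)
    (hms : ∀ x ∈ M, Tendsto (fun n => ∑ i ∈ Finset.range n, (m i ∘L adjoint (m i)) ∘L x)
      atTop (𝓝 x))
    (Y : Set (H →L[ℂ] K))
    (hY : Y = clspan {x : H →L[ℂ] K | ∃ m' ∈ M, ∃ a ∈ A, x = m' ∘L a}) :
    ∀ y ∈ Y, (∀ i, adjoint (m i) ∘L y ∈ A) ∧
      ∃ S : H →L[ℂ] H,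
        Tendsto (fun n => ∑ i ∈ Finset.range n,
          adjoint (adjoint (m i) ∘L y) ∘L (adjoint (m i) ∘L y)) atTop (𝓝 S) ∧
        ‖S‖ = ‖y‖ ^ 2 := by
  intro y hy
  rw [hY] at hy
  set G : Set (H →L[ℂ] K) := {x : H →L[ℂ] K | ∃ m' ∈ M, ∃ a ∈ A, x = m' ∘L a} with hG
  -- Part 1: each entry lies in A
  have h1 : ∀ i, adjoint (m i) ∘L y ∈ A := by
    intro i
    have hmap : ∀ z ∈ (Submodule.span ℂ G : Set (H →L[ℂ] K)), adjoint (m i) ∘L z ∈ A := by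
      intro z hz
      induction hz using Submodule.span_induction with
      | mem x hx =>
        obtain ⟨m', hm', a, ha, rfl⟩ := hx
        simpa [ContinuousLinearMap.comp_assoc] using hMMA (m i) (hm i) m' hm' a ha
      | zero => simpa using A.zero_mem
      | add u v _ _ ihu ihv => simpa [ContinuousLinearMap.comp_add] using A.add_mem ihu ihv
      | smul c u _ ih => simpa [ContinuousLinearMap.comp_smul] using A.smul_mem c ih
    have hcont : Continuous fun z : H →L[ℂ] K => adjoint (m i) ∘L z :=
      (ContinuousLinearMap.compL ℂ H K H (adjoint (m i))).continuous
    have := map_mem_closure hcont hy hmap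
    rwa [hAc.closure_eq] at this
  refine ⟨h1, adjoint y ∘L y, ?_, ?_⟩
  · -- convergence
    set P : ℕ → (K →L[ℂ] K) := fun n => ∑ i ∈ Finset.range n, m i ∘L adjoint (m i) with hP
    have hPy : Tendsto (fun n => P n ∘L y) atTop (𝓝 y) := by
      have hspan : ∀ z ∈ (Submodule.span ℂ G : Set (H →L[ℂ] K)),
          Tendsto (fun n => P n ∘L z) atTop (𝓝 z) := by
        intro z hz
        induction hz using Submodule.span_induction with
        | mem x hx =>
          obtain ⟨m', hm', a, ha, rfl⟩ := hx
          have h0 := hms m' hm'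
          have h2 : Tendsto (fun n => (∑ i ∈ Finset.range n, (m i ∘L adjoint (m i)) ∘L m') ∘L a)
              atTop (𝓝 (m' ∘L a)) :=
            ((ContinuousLinearMap.compL ℂ H H K).flip a |>.continuous.tendsto m').comp h0
          convert h2 using 2 with n
          simp [hP, ContinuousLinearMap.finset_sum_comp, ContinuousLinearMap.comp_assoc]
        | zero => simpa using tendsto_const_nhds
        | add u v _ _ ihu ihv =>
          simpa [ContinuousLinearMap.comp_add] using ihu.add ihv
        | smul c u _ ih =>
          simpa [ContinuousLinearMap.comp_smul] using ih.const_smul c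
      rw [Metric.tendsto_atTop]
      intro ε hε
      obtain ⟨z, hzmem, hzy⟩ := Metric.mem_closure_iff.mp hy (ε / 3) (by linarith)
      obtain ⟨N, hN⟩ := Metric.tendsto_atTop.mp (hspan z hzmem) (ε / 3) (by linarith)
      refine ⟨N, fun n hn => ?_⟩
      have hPn : ‖P n‖ ≤ 1 := hmn n
      have hdz : ‖y - z‖ < ε / 3 := by
        simpa [dist_eq_norm] using hzy
      have hNz : ‖P n ∘L z - z‖ < ε / 3 := by
        simpa [dist_eq_norm] using hN n hn
      have key : P n ∘L y - y = P n ∘L (y - z) + (P n ∘L z - z) + (z - y) := by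
        simp only [ContinuousLinearMap.comp_sub]
        abel
      rw [dist_eq_norm, key]
      have hb1 : ‖P n ∘L (y - z)‖ ≤ ‖y - z‖ := by
        calc ‖P n ∘L (y - z)‖ ≤ ‖P n‖ * ‖y - z‖ := ContinuousLinearMap.opNorm_comp_le _ _
        _ ≤ 1 * ‖y - z‖ := by gcongr
        _ = ‖y - z‖ := one_mul _
      calc ‖P n ∘L (y - z) + (P n ∘L z - z) + (z - y)‖
          ≤ ‖P n ∘L (y - z) + (P n ∘L z - z)‖ + ‖z - y‖ := norm_add_le _ _
        _ ≤ ‖P n ∘L (y - z)‖ + ‖P n ∘L z - z‖ + ‖z - y‖ := by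
            gcongr; exact norm_add_le _ _
        _ < ε / 3 + ε / 3 + ε / 3 := by
            have : ‖z - y‖ < ε / 3 := by rwa [norm_sub_rev]
            have h1' : ‖P n ∘L (y - z)‖ < ε / 3 := lt_of_le_of_lt hb1 hdz
            linarith
        _ = ε := by ring
    have heq : (fun n => ∑ i ∈ Finset.range n,
        adjoint (adjoint (m i) ∘L y) ∘L (adjoint (m i) ∘L y))
        = fun n => adjoint y ∘L (P n ∘L y) := by
      funext n
      rw [hP, ContinuousLinearMap.finset_sum_comp, ContinuousLinearMap.comp_finset_sum]
      refine Finset.sum_congr rfl fun i _ => ?_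
      rw [ContinuousLinearMap.adjoint_comp, ContinuousLinearMap.adjoint_adjoint]
      simp [ContinuousLinearMap.comp_assoc]
    rw [heq]
    exact ((ContinuousLinearMap.compL ℂ H K H (adjoint y)).continuous.tendsto y).comp hPy
  · rw [ContinuousLinearMap.norm_adjoint_comp_self, sq]
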